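/- Let R_n be defined by R_0=1, R_1(X)=1-X, R_n(X)=(2-X)R_{n-1}(X)-R_{n-2}(X), let r(s)=2(1-cos(π/(2s+1))), and define h_s(X)=2R_{s-1}(X)+(X-3)R_s(X). Then h_s is strictly increasing on [0, r(s)] and has a unique root in the open interval (0, r(s)). -/

import Mathlib

set_option maxHeartbeats 1000000

open Polynomial

theorem stmt_9 (R : ℕ → Polynomial ℝ)
    (hR0 : R 0 = 1) (hR1 : R 1 = 1 - X)
    (hRrec : ∀ n, 2 ≤ n → R n = (2 - X) * R (n - 1) - R (n - 2))
    (s : ℕ) (hs : 1 ≤ s) :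
    StrictMonoOn (fun x : ℝ => (2 * R (s - 1) + (X - 3) * R s).eval x)
        (Set.Icc 0 (2 * (1 - Real.cos (Real.pi / (2 * s + 1))))) ∧
      ∃! x : ℝ, x ∈ Set.Ioo 0 (2 * (1 - Real.cos (Real.pi / (2 * s + 1)))) ∧
        (2 * R (s - 1) + (X - 3) * R s).eval x = 0 := by
  obtain ⟨t, rfl⟩ : ∃ t, s = t + 1 := ⟨s - 1, by omega⟩
  simp only [Nat.add_sub_cancel]
  rw [show ((2:ℝ) * ((t+1 : ℕ):ℝ) + 1) = 2*(t:ℝ)+3 by push_cast; ring]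
  have hπ := Real.pi_pos
  set θ₀ : ℝ := Real.pi / (2*(t:ℝ)+3) with hθ₀
  have ht3 : (0:ℝ) < 2*(t:ℝ)+3 := by positivity
  have hθpos : 0 < θ₀ := by positivity
  have hθeq : (2*(t:ℝ)+3) * θ₀ = Real.pi := by
    rw [hθ₀]; field_simp
  set L : ℝ := θ₀ / 2 with hL
  have hLpos : 0 < L := by positivity
  have hLlt : L < Real.pi / 2 := by
    rw [hL]
    have : θ₀ < Real.pi := by nlinarith
    linarith
  -- key evaluation of R n
  have keyR : ∀ n : ℕ, ∀ φ : ℝ,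
      (R n).eval (4 * Real.sin φ ^ 2) * Real.cos φ = Real.cos ((2*(n:ℝ)+1)*φ) := by
    intro n
    induction n using Nat.twoStepInduction with
    | zero =>
      intro φ; rw [hR0]; norm_num
    | one =>
      intro φ; rw [hR1]
      simp only [eval_sub, eval_one, eval_X]
      rw [show (2*((1:ℕ):ℝ)+1)*φ = 3*φ by push_cast; ring, Real.cos_three_mul]
      linear_combination (-4*Real.cos φ) * (Real.sin_sq_add_cos_sq φ)
    | more n ih1 ih2 =>
      intro φ
      rw [hRrec (n+2) (by omega), show n+2-1 = n+1 from rfl, show n+2-2 = n from rfl]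
      simp only [eval_sub, eval_mul, eval_X, eval_ofNat]
      have hc : Real.cos ((2*((n+2:ℕ):ℝ)+1)*φ)
          = (2 - 4*Real.sin φ^2) * Real.cos ((2*((n+1:ℕ):ℝ)+1)*φ) - Real.cos ((2*(n:ℝ)+1)*φ) := by
        rw [show (2*((n+2:ℕ):ℝ)+1)*φ = (2*((n+1:ℕ):ℝ)+1)*φ + 2*φ by push_cast; ring,
            show (2*(n:ℝ)+1)*φ = (2*((n+1:ℕ):ℝ)+1)*φ - 2*φ by push_cast; ring,
            Real.cos_add, Real.cos_sub, Real.cos_two_mul, Real.sin_two_mul]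
        linear_combination (4*Real.cos ((2*((n+1:ℕ):ℝ)+1)*φ)) * (Real.sin_sq_add_cos_sq φ)
      rw [hc]
      linear_combination (2 - 4*Real.sin φ^2) * (ih2 φ) - ih1 φ
  -- evaluation of the polynomial h
  have hval : ∀ φ : ℝ,
      (2 * R t + (X - 3) * R (t+1)).eval (4 * Real.sin φ ^ 2) * Real.cos φ
        = Real.cos ((2*(t:ℝ)+1)*φ) - Real.cos ((2*(t:ℝ)+3)*φ) - Real.cos ((2*(t:ℝ)+5)*φ) := by
    intro φ
    have A := keyR t φ
    have B := keyR (t+1) φ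
    rw [show (2*((t+1:ℕ):ℝ)+1)*φ = (2*(t:ℝ)+3)*φ by push_cast; ring] at B
    simp only [eval_add, eval_mul, eval_sub, eval_X, eval_ofNat]
    have hc : Real.cos ((2*(t:ℝ)+5)*φ)
        = (2 - 4*Real.sin φ^2) * Real.cos ((2*(t:ℝ)+3)*φ) - Real.cos ((2*(t:ℝ)+1)*φ) := by
      rw [show (2*(t:ℝ)+5)*φ = (2*(t:ℝ)+3)*φ + 2*φ by ring,
          show (2*(t:ℝ)+1)*φ = (2*(t:ℝ)+3)*φ - 2*φ by ring,
          Real.cos_add, Real.cos_sub, Real.cos_two_mul, Real.sin_two_mul]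
      linear_combination (4*Real.cos ((2*(t:ℝ)+3)*φ)) * (Real.sin_sq_add_cos_sq φ)
    rw [hc]
    linear_combination 2 * A + (4 * Real.sin φ ^ 2 - 3) * B
  -- the auxiliary function F
  set G : ℝ → ℝ := fun φ => Real.cos ((2*(t:ℝ)+1)*φ) - Real.cos ((2*(t:ℝ)+3)*φ)
      - Real.cos ((2*(t:ℝ)+5)*φ) with hGdef
  set G' : ℝ → ℝ := fun φ => -((2*(t:ℝ)+1) * Real.sin ((2*(t:ℝ)+1)*φ))
      + (2*(t:ℝ)+3) * Real.sin ((2*(t:ℝ)+3)*φ) + (2*(t:ℝ)+5) * Real.sin ((2*(t:ℝ)+5)*φ) with hG'def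
  set F : ℝ → ℝ := fun φ => G φ / Real.cos φ with hFdef
  have hGderiv : ∀ φ : ℝ, HasDerivAt G (G' φ) φ := by
    intro φ
    have h1 : HasDerivAt (fun ψ : ℝ => Real.cos ((2*(t:ℝ)+1)*ψ))
        (-Real.sin ((2*(t:ℝ)+1)*φ) * ((2*(t:ℝ)+1)*1)) φ :=
      ((hasDerivAt_id φ).const_mul (2*(t:ℝ)+1)).cos
    have h2 : HasDerivAt (fun ψ : ℝ => Real.cos ((2*(t:ℝ)+3)*ψ))
        (-Real.sin ((2*(t:ℝ)+3)*φ) * ((2*(t:ℝ)+3)*1)) φ :=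
      ((hasDerivAt_id φ).const_mul (2*(t:ℝ)+3)).cos
    have h3 : HasDerivAt (fun ψ : ℝ => Real.cos ((2*(t:ℝ)+5)*ψ))
        (-Real.sin ((2*(t:ℝ)+5)*φ) * ((2*(t:ℝ)+5)*1)) φ :=
      ((hasDerivAt_id φ).const_mul (2*(t:ℝ)+5)).cos
    have := (h1.sub h2).sub h3
    exact this.congr_deriv (by rw [hG'def]; ring)
  -- derivative of F
  have hFderiv : ∀ φ : ℝ, Real.cos φ ≠ 0 →
      HasDerivAt F ((G' φ * Real.cos φ - G φ * (-Real.sin φ)) / Real.cos φ ^ 2) φ := by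
    intro φ hφ
    exact (hGderiv φ).div (Real.hasDerivAt_cos φ) hφ
  -- positivity of the numerator on (0, L)
  have hNpos : ∀ φ ∈ Set.Ioo (0:ℝ) L, 0 < G' φ * Real.cos φ - G φ * (-Real.sin φ) := by
    intro φ hφ
    obtain ⟨hφ0, hφL⟩ := hφ
    have hφθ : 2 * φ < θ₀ := by rw [hL] at hφL; linarith
    have trig : G' φ * Real.cos φ + G φ * Real.sin φ
        = 2 * Real.sin ((2*(t:ℝ)+2)*φ) - ((t:ℝ)+1) * Real.sin ((2*(t:ℝ))*φ)
          + (2*(t:ℝ)+4) * Real.sin ((2*(t:ℝ)+4)*φ) + ((t:ℝ)+2) * Real.sin ((2*(t:ℝ)+6)*φ) := by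
      rw [hGdef, hG'def]
      simp only
      rw [show (2*(t:ℝ)+1)*φ = (2*(t:ℝ)+3)*φ - 2*φ from by ring,
          show (2*(t:ℝ)+5)*φ = (2*(t:ℝ)+3)*φ + 2*φ from by ring,
          show (2*(t:ℝ)+2)*φ = (2*(t:ℝ)+3)*φ - φ from by ring,
          show (2*(t:ℝ))*φ = (2*(t:ℝ)+3)*φ - 3*φ from by ring,
          show (2*(t:ℝ)+4)*φ = (2*(t:ℝ)+3)*φ + φ from by ring,
          show (2*(t:ℝ)+6)*φ = (2*(t:ℝ)+3)*φ + 3*φ from by ring]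
      simp only [Real.sin_sub, Real.sin_add, Real.cos_sub, Real.cos_add,
        Real.sin_two_mul, Real.cos_two_mul, Real.sin_three_mul, Real.cos_three_mul]
      linear_combination ((8*(t:ℝ)+12) * Real.cos ((2*(t:ℝ)+3)*φ) * Real.sin φ
        + 4 * Real.sin ((2*(t:ℝ)+3)*φ) * Real.cos φ) * (Real.sin_sq_add_cos_sq φ)
    have ht0 : (0:ℝ) ≤ (t:ℝ) := Nat.cast_nonneg t
    have h2 : 0 < Real.sin ((2*(t:ℝ)+2)*φ) := by
      apply Real.sin_pos_of_pos_of_lt_pi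
      · positivity
      · nlinarith [hθeq]
    have h0 : 0 ≤ Real.sin ((2*(t:ℝ))*φ) := by
      apply Real.sin_nonneg_of_nonneg_of_le_pi
      · positivity
      · nlinarith [hθeq]
    have h4 : 0 ≤ Real.sin ((2*(t:ℝ)+4)*φ) := by
      apply Real.sin_nonneg_of_nonneg_of_le_pi
      · positivity
      · nlinarith [hθeq]
    have h6 : 0 ≤ Real.sin ((2*(t:ℝ)+6)*φ) := by
      apply Real.sin_nonneg_of_nonneg_of_le_pi
      · positivity
      · nlinarith [hθeq]
    have h40 : Real.sin ((2*(t:ℝ))*φ) ≤ Real.sin ((2*(t:ℝ)+4)*φ) := by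
      have hd : Real.sin ((2*(t:ℝ)+4)*φ) - Real.sin ((2*(t:ℝ))*φ)
          = 2 * Real.sin (((2*(t:ℝ)+4)*φ - (2*(t:ℝ))*φ)/2)
            * Real.cos (((2*(t:ℝ)+4)*φ + (2*(t:ℝ))*φ)/2) := Real.sin_sub_sin _ _
      have e1 : ((2*(t:ℝ)+4)*φ - (2*(t:ℝ))*φ)/2 = 2*φ := by ring
      have e2 : ((2*(t:ℝ)+4)*φ + (2*(t:ℝ))*φ)/2 = (2*(t:ℝ)+2)*φ := by ring
      rw [e1, e2] at hd
      have hs2 : 0 ≤ Real.sin (2*φ) := by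
        apply Real.sin_nonneg_of_nonneg_of_le_pi
        · linarith
        · nlinarith [hθeq]
      have hc2 : 0 ≤ Real.cos ((2*(t:ℝ)+2)*φ) := by
        apply Real.cos_nonneg_of_mem_Icc
        constructor
        · nlinarith
        · nlinarith [hθeq]
      nlinarith
    have key : 0 < G' φ * Real.cos φ + G φ * Real.sin φ := by
      rw [trig]
      nlinarith [mul_nonneg ht0 (sub_nonneg.mpr h40)]
    calc (0:ℝ) < G' φ * Real.cos φ + G φ * Real.sin φ := key
      _ = G' φ * Real.cos φ - G φ * (-Real.sin φ) := by ring
  -- cos positive on [0, L]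
  have hcospos : ∀ φ ∈ Set.Icc (0:ℝ) L, 0 < Real.cos φ := by
    intro φ hφ
    apply Real.cos_pos_of_mem_Ioo
    constructor
    · linarith [hφ.1]
    · linarith [hφ.2]
  -- F strictly monotone on [0, L]
  have hFmono : StrictMonoOn F (Set.Icc 0 L) := by
    apply strictMonoOn_of_deriv_pos (convex_Icc 0 L)
    · apply ContinuousOn.div
      · exact (Continuous.sub (Continuous.sub (by fun_prop) (by fun_prop)) (by fun_prop)).continuousOn
      · exact Real.continuous_cos.continuousOn
      · intro x hx; exact (hcospos x hx).ne'
    · intro x hx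
      rw [interior_Icc] at hx
      have hcx : Real.cos x ≠ 0 := (hcospos x ⟨le_of_lt hx.1, le_of_lt hx.2⟩).ne'
      rw [(hFderiv x hcx).deriv]
      apply div_pos (hNpos x hx)
      positivity
  -- relation between f and F
  set r : ℝ := 2 * (1 - Real.cos θ₀) with hr
  have hrL : r = 4 * Real.sin L ^ 2 := by
    have hc2 : Real.cos θ₀ = 1 - 2 * Real.sin L ^ 2 := by
      rw [show θ₀ = 2*L by rw [hL]; ring, Real.cos_two_mul]
      linear_combination 2 * Real.sin_sq_add_cos_sq L
    rw [hr, hc2]; ring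
  have hsinL : 0 < Real.sin L := Real.sin_pos_of_pos_of_lt_pi hLpos (by linarith)
  have hrpos : 0 < r := by rw [hrL]; positivity
  have hsqr : Real.sqrt r = 2 * Real.sin L := by
    rw [hrL, show 4 * Real.sin L ^ 2 = (2 * Real.sin L)^2 by ring]
    exact Real.sqrt_sq (by positivity)
  set ψ : ℝ → ℝ := fun x => Real.arcsin (Real.sqrt x / 2) with hψdef
  have hψmem : ∀ x ∈ Set.Icc (0:ℝ) r, ψ x ∈ Set.Icc (0:ℝ) L ∧ 4 * Real.sin (ψ x) ^ 2 = x := by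
    intro x hx
    obtain ⟨hx0, hxr⟩ := hx
    have hsx : Real.sqrt x / 2 ≤ Real.sin L := by
      have : Real.sqrt x ≤ Real.sqrt r := Real.sqrt_le_sqrt hxr
      rw [hsqr] at this; linarith
    have hsL1 : Real.sin L ≤ 1 := Real.sin_le_one L
    have hs0 : 0 ≤ Real.sqrt x / 2 := by positivity
    have hψ0 : 0 ≤ ψ x := Real.arcsin_nonneg.mpr hs0
    have hψL : ψ x ≤ L := by
      have h1 : Real.arcsin (Real.sqrt x / 2) ≤ Real.arcsin (Real.sin L) :=
        Real.monotone_arcsin hsx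
      rwa [Real.arcsin_sin (by linarith) (by linarith)] at h1
    have hsin : Real.sin (ψ x) = Real.sqrt x / 2 :=
      Real.sin_arcsin (by linarith) (by linarith)
    refine ⟨⟨hψ0, hψL⟩, ?_⟩
    rw [hsin]
    have : Real.sqrt x ^ 2 = x := Real.sq_sqrt hx0
    nlinarith
  have hfF : ∀ x ∈ Set.Icc (0:ℝ) r,
      (2 * R t + (X - 3) * R (t+1)).eval x = F (ψ x) := by
    intro x hx
    obtain ⟨hmem, hxeq⟩ := hψmem x hx
    have hcos : 0 < Real.cos (ψ x) := hcospos _ hmem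
    have := hval (ψ x)
    rw [hxeq] at this
    rw [hFdef]
    simp only
    rw [hGdef]
    simp only
    rw [eq_div_iff hcos.ne']
    exact this
  -- strict monotonicity of ψ
  have hψmono : ∀ x ∈ Set.Icc (0:ℝ) r, ∀ y ∈ Set.Icc (0:ℝ) r, x < y → ψ x < ψ y := by
    intro x hx y hy hxy
    have h1 : Real.sqrt x < Real.sqrt y := Real.sqrt_lt_sqrt hx.1 hxy
    have h2 : Real.sqrt y ≤ Real.sqrt r := Real.sqrt_le_sqrt hy.2
    rw [hsqr] at h2
    have hsL1 : Real.sin L ≤ 1 := Real.sin_le_one L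
    apply Real.strictMonoOn_arcsin
    · constructor
      · have : (0:ℝ) ≤ Real.sqrt x / 2 := by positivity
        linarith
      · linarith
    · constructor
      · have : (0:ℝ) ≤ Real.sqrt y / 2 := by positivity
        linarith
      · linarith
    · linarith
  have hmono : StrictMonoOn (fun x : ℝ => (2 * R t + (X - 3) * R (t+1)).eval x)
      (Set.Icc 0 r) := by
    intro x hx y hy hxy
    simp only
    rw [hfF x hx, hfF y hy]
    exact hFmono (hψmem x hx).1 (hψmem y hy).1 (hψmono x hx y hy hxy)
  refine ⟨hmono, ?_⟩
  -- f 0 = -1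
  have hR0eval : ∀ n : ℕ, (R n).eval 0 = 1 := by
    intro n
    induction n using Nat.twoStepInduction with
    | zero => rw [hR0]; simp
    | one => rw [hR1]; simp
    | more n ih1 ih2 =>
      rw [hRrec (n+2) (by omega), show n+2-1 = n+1 from rfl, show n+2-2 = n from rfl]
      simp only [eval_sub, eval_mul, eval_X, eval_ofNat, ih1, ih2]
      ring
  have hf0 : (2 * R t + (X - 3) * R (t+1)).eval 0 = -1 := by
    simp only [eval_add, eval_mul, eval_sub, eval_X, eval_ofNat, hR0eval]
    ring
  -- f r > 0
  have hfr : 0 < (2 * R t + (X - 3) * R (t+1)).eval r := by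
    have hLmem : L ∈ Set.Icc (0:ℝ) L := ⟨le_of_lt hLpos, le_refl L⟩
    have := hval L
    rw [← hrL] at this
    have e1 : (2*(t:ℝ)+1)*L = Real.pi/2 - θ₀ := by
      rw [hL]; nlinarith [hθeq]
    have e2 : (2*(t:ℝ)+3)*L = Real.pi/2 := by
      rw [hL]; nlinarith [hθeq]
    have e3 : (2*(t:ℝ)+5)*L = θ₀ + Real.pi/2 := by
      rw [hL]; nlinarith [hθeq]
    rw [e1, e2, e3, Real.cos_pi_div_two_sub, Real.cos_pi_div_two,
      Real.cos_add_pi_div_two] at this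
    have hsθ : 0 < Real.sin θ₀ := Real.sin_pos_of_pos_of_lt_pi hθpos (by nlinarith)
    have hcL : 0 < Real.cos L := hcospos L hLmem
    nlinarith
  -- existence
  have hcont : ContinuousOn (fun x : ℝ => (2 * R t + (X - 3) * R (t+1)).eval x)
      (Set.Icc 0 r) := (Polynomial.continuous _).continuousOn
  have hIVT := intermediate_value_Ioo (le_of_lt hrpos) hcont
  have h0mem : (0:ℝ) ∈ Set.Ioo ((2 * R t + (X - 3) * R (t+1)).eval 0)
      ((2 * R t + (X - 3) * R (t+1)).eval r) := by
    constructor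
    · rw [hf0]; norm_num
    · exact hfr
  obtain ⟨x, hxmem, hxval⟩ := hIVT h0mem
  refine ⟨x, ⟨hxmem, hxval⟩, ?_⟩
  rintro y ⟨hymem, hyval⟩
  have hinj := hmono.injOn
  apply hinj (Set.mem_Icc_of_Ioo hymem) (Set.mem_Icc_of_Ioo hxmem)
  simp only [hxval, hyval]
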